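/- Let G be a countably infinite group acting on ℓ∞(G,K) by left translation. Then the only G-invariant densely defined lower semi-continuous trace on ℓ∞(G,K) is zero. -/

import Mathlib

open scoped ENNReal

/-- The Hilbert space `ℓ²(ℕ)`. -/
noncomputable abbrev HS : Type := lp (fun _ : ℕ => ℂ) 2

/-- `f` is an element of `ℓ∞(G, B(HS))`. -/
def Bdd {G : Type*} (f : G → HS →L[ℂ] HS) : Prop := ∃ C : ℝ, ∀ t, ‖f t‖ ≤ C

/-- `f` takes values in the compact operators. -/
def Cpt {G : Type*} (f : G → HS →L[ℂ] HS) : Prop := ∀ t, IsCompactOperator (f t)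

/-- `f` takes positive operator values. -/
def Pos {G : Type*} (f : G → HS →L[ℂ] HS) : Prop := ∀ t, (f t).IsPositive

/-- `T` is a finite-rank operator. -/
def FinRank (T : HS →L[ℂ] HS) : Prop :=
  FiniteDimensional ℂ (LinearMap.range (T : HS →ₗ[ℂ] HS))

set_option synthInstance.maxHeartbeats 1000000
set_option maxHeartbeats 1000000

noncomputable instance St18_instCFCR : ContinuousFunctionalCalculus ℝ (HS →L[ℂ] HS) IsSelfAdjoint :=
  IsSelfAdjoint.instContinuousFunctionalCalculus

noncomputable instance St18_instNUCFCR : NonUnitalContinuousFunctionalCalculus ℝ (HS →L[ℂ] HS) IsSelfAdjoint :=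
  IsSelfAdjoint.instNonUnitalContinuousFunctionalCalculus

namespace St18
open ContinuousLinearMap
open scoped ComplexConjugate ENNReal
local notation "⟪" x ", " y "⟫" => @inner ℂ _ _ x y

instance : Nontrivial HS := by
  refine ⟨lp.single 2 0 (1 : ℂ), 0, fun h => ?_⟩
  have := congrArg (fun f : HS => (f : ∀ _ : ℕ, ℂ) 0) h
  simp [lp.single_apply] at this


lemma finRank_zero : FinRank 0 := by
  unfold FinRank
  rw [show ((0 : HS →L[ℂ] HS) : HS →ₗ[ℂ] HS) = 0 from rfl, LinearMap.range_zero]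
  infer_instance

lemma finRank_of_le {T : HS →L[ℂ] HS} {p : Submodule ℂ HS} (hp : FiniteDimensional ℂ p)
    (h : LinearMap.range (T : HS →ₗ[ℂ] HS) ≤ p) : FinRank T :=
  Submodule.finiteDimensional_of_le (S₂ := p) h

lemma finRank_add {A B : HS →L[ℂ] HS} (hA : FinRank A) (hB : FinRank B) : FinRank (A + B) := by
  haveI : FiniteDimensional ℂ (LinearMap.range (A : HS →ₗ[ℂ] HS)) := hA
  haveI : FiniteDimensional ℂ (LinearMap.range (B : HS →ₗ[ℂ] HS)) := hB
  refine finRank_of_le (p := LinearMap.range (A : HS →ₗ[ℂ] HS) ⊔ LinearMap.range (B : HS →ₗ[ℂ] HS))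
    inferInstance ?_
  rintro x ⟨y, rfl⟩
  exact Submodule.mem_sup.2 ⟨A y, ⟨y, rfl⟩, B y, ⟨y, rfl⟩, rfl⟩

lemma finRank_sum {ι : Type*} (s : Finset ι) (f : ι → HS →L[ℂ] HS)
    (h : ∀ i ∈ s, FinRank (f i)) : FinRank (∑ i ∈ s, f i) := by
  classical
  induction s using Finset.induction_on with
  | empty => simpa using finRank_zero
  | @insert a s hx ih =>
    rw [Finset.sum_insert hx]
    exact finRank_add (h _ (Finset.mem_insert_self _ _))
      (ih fun i hi => h i (Finset.mem_insert_of_mem hi))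

lemma finRank_comp_left {A : HS →L[ℂ] HS} (B : HS →L[ℂ] HS) (hA : FinRank A) :
    FinRank (B ∘L A) := by
  haveI : FiniteDimensional ℂ (LinearMap.range (A : HS →ₗ[ℂ] HS)) := hA
  refine finRank_of_le (p := (LinearMap.range (A : HS →ₗ[ℂ] HS)).map (B : HS →ₗ[ℂ] HS))
    inferInstance ?_
  rintro x ⟨y, rfl⟩
  exact ⟨A y, ⟨y, rfl⟩, rfl⟩

lemma finRank_comp_right {A : HS →L[ℂ] HS} (B : HS →L[ℂ] HS) (hA : FinRank A) :
    FinRank (A ∘L B) := by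
  refine finRank_of_le (p := LinearMap.range (A : HS →ₗ[ℂ] HS)) hA ?_
  rintro x ⟨y, rfl⟩
  exact ⟨B y, rfl⟩

lemma finRank_isCompact {T : HS →L[ℂ] HS} (hT : FinRank T) : IsCompactOperator T := by
  haveI : FiniteDimensional ℂ (LinearMap.range (T : HS →ₗ[ℂ] HS)) := hT
  set V := LinearMap.range (T : HS →ₗ[ℂ] HS)
  rw [isCompactOperator_iff_exists_mem_nhds_image_subset_compact]
  refine ⟨Metric.closedBall 0 1, Metric.closedBall_mem_nhds _ zero_lt_one,
    (↑) '' (Metric.closedBall (0 : V) ‖T‖), ?_, ?_⟩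
  · exact (ProperSpace.isCompact_closedBall _ _).image continuous_subtype_val
  · rintro x ⟨y, hy, rfl⟩
    refine ⟨⟨T y, ⟨y, rfl⟩⟩, ?_, rfl⟩
    simp only [Metric.mem_closedBall, dist_zero_right] at hy ⊢
    calc ‖(⟨T y, ⟨y, rfl⟩⟩ : V)‖ = ‖T y‖ := rfl
      _ ≤ ‖T‖ * ‖y‖ := T.le_opNorm y
      _ ≤ ‖T‖ * 1 := mul_le_mul_of_nonneg_left hy (norm_nonneg _)
      _ = ‖T‖ := mul_one _

open ContinuousLinearMap
lemma sqrt_finRank {a : HS →L[ℂ] HS} (ha : a.IsPositive) (hfr : FinRank a) :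
    FinRank (CFC.sqrt a) := by
  haveI : FiniteDimensional ℂ (LinearMap.range (a : HS →ₗ[ℂ] HS)) := hfr
  have ha' : (0 : HS →L[ℂ] HS) ≤ a := (nonneg_iff_isPositive a).2 ha
  set s := CFC.sqrt a with hs
  have hs0 : (0 : HS →L[ℂ] HS) ≤ s := CFC.sqrt_nonneg a
  have hmul : s * s = a := CFC.sqrt_mul_sqrt_self a ha'
  have hssym : (s : HS →ₗ[ℂ] HS).IsSymmetric :=
    isSelfAdjoint_iff_isSymmetric.1 ((nonneg_iff_isPositive s).1 hs0).isSelfAdjoint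
  have hasym : (a : HS →ₗ[ℂ] HS).IsSymmetric := isSelfAdjoint_iff_isSymmetric.1 ha.isSelfAdjoint
  have hker : ∀ x, a x = 0 → s x = 0 := by
    intro x hx
    have h1 : ⟪s x, s x⟫ = (0 : ℂ) := by
      have := hssym (s x) x
      calc ⟪s x, s x⟫ = ⟪s (s x), x⟫ := this.symm
        _ = ⟪a x, x⟫ := by rw [← hmul]; rfl
        _ = 0 := by rw [hx, inner_zero_left]
    exact inner_self_eq_zero.1 h1
  have hcl : IsClosed (LinearMap.range (a : HS →ₗ[ℂ] HS) : Set HS) :=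
    Submodule.closed_of_finiteDimensional _
  refine finRank_of_le (p := LinearMap.range (a : HS →ₗ[ℂ] HS)) hfr ?_
  rintro y ⟨x, rfl⟩
  have hmem : s x ∈ ((LinearMap.range (a : HS →ₗ[ℂ] HS))ᗮ)ᗮ := by
    rw [Submodule.mem_orthogonal]
    intro z hz
    have hz' : ∀ u ∈ LinearMap.range (a : HS →ₗ[ℂ] HS), ⟪z, u⟫ = (0 : ℂ) :=
      (Submodule.mem_orthogonal' _ z).1 hz
    have haz : a z = 0 := by
      have : ⟪a z, a z⟫ = (0 : ℂ) := by
        calc ⟪a z, a z⟫ = ⟪z, a (a z)⟫ := hasym z (a z)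
          _ = 0 := hz' _ ⟨a z, rfl⟩
      exact inner_self_eq_zero.1 this
    have hsz : s z = 0 := hker z haz
    calc ⟪z, s x⟫ = ⟪s z, x⟫ := (hssym z x).symm
      _ = 0 := by rw [hsz]; simp
  rwa [Submodule.orthogonal_orthogonal_eq_closure,
    IsClosed.submodule_topologicalClosure_eq hcl] at hmem

open ContinuousLinearMap

lemma cutoff_isPositive {A : HS →L[ℂ] HS} (ε : ℝ) :
    (cfc (fun s : ℝ => max (s - ε) 0) A).IsPositive :=
  (nonneg_iff_isPositive _).1 (cfc_nonneg fun x _ => le_max_right _ 0)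

lemma cutoff_norm_le {A : HS →L[ℂ] HS} {C : ℝ} (hC : ‖A‖ ≤ C) {ε : ℝ} (hε : 0 ≤ ε) :
    ‖cfc (fun s : ℝ => max (s - ε) 0) A‖ ≤ max C 0 := by
  apply norm_cfc_le (le_max_right C 0)
  intro x hx
  have h1 : ‖x‖ ≤ ‖A‖ := spectrum.norm_le_norm_of_mem hx
  rw [Real.norm_eq_abs, abs_of_nonneg (le_max_right _ 0)]
  rcases le_total (x - ε) 0 with h | h
  · rw [max_eq_right h]; exact le_max_right _ _
  · rw [max_eq_left h]
    refine le_max_of_le_left ?_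
    have : x ≤ ‖A‖ := (le_abs_self x).trans h1
    linarith [(spectrum.norm_le_norm_of_mem hx : ‖x‖ ≤ ‖A‖)]

lemma cutoff_finRank {A : HS →L[ℂ] HS} (hA : A.IsPositive) (hcpt : IsCompactOperator A)
    {ε : ℝ} (hε : 0 < ε) : FinRank (cfc (fun s : ℝ => max (s - ε) 0) A) := by
  have hsa : IsSelfAdjoint A := hA.isSelfAdjoint
  set φ : ℝ → ℝ := fun s => max (s - ε) 0 with hφ
  set T : HS →L[ℂ] HS := cfc φ A with hT
  have hTsa : IsSelfAdjoint T := cfc_predicate φ A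
  have hTsym : (T : HS →ₗ[ℂ] HS).IsSymmetric := isSelfAdjoint_iff_isSymmetric.1 hTsa
  -- operator inequality
  have hcont : Continuous φ := by fun_prop
  have hd : (0 : HS →L[ℂ] HS) ≤ cfc (fun x : ℝ => φ x * x * φ x - ε * (φ x * φ x)) A := by
    apply cfc_nonneg
    intro x _
    rcases le_total x ε with h | h
    · have : φ x = 0 := by simp [hφ, max_eq_right, sub_nonpos.2 h]
      simp [this]
    · have : φ x = x - ε := by simp [hφ, max_eq_left, sub_nonneg.2 h]
      rw [this]; nlinarith
  have hsub : cfc (fun x : ℝ => φ x * x * φ x - ε * (φ x * φ x)) A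
      = T * A * T - ε • (T * T) := by
    rw [cfc_sub ..]
    congr 1
    · calc cfc (fun x : ℝ => φ x * x * φ x) A
          = cfc (fun x : ℝ => (φ x * x) * φ x) A := by simp [mul_assoc]
        _ = cfc (fun x : ℝ => φ x * x) A * T := by rw [cfc_mul ..]
        _ = (T * cfc (fun x : ℝ => x) A) * T := by rw [cfc_mul ..]
        _ = T * A * T := by rw [cfc_id' ℝ A]
    · calc cfc (fun x : ℝ => ε * (φ x * φ x)) A
          = ε • cfc (fun x : ℝ => φ x * φ x) A := by
            rw [← cfc_smul ε (fun x : ℝ => φ x * φ x) A]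
            simp [smul_eq_mul]
        _ = ε • (T * T) := by rw [cfc_mul ..]
  rw [hsub] at hd
  have hkey : ∀ y : HS, ε * ‖T y‖ ^ 2 ≤ RCLike.re ⟪A (T y), T y⟫ := by
    intro y
    have h0 : (0 : ℝ) ≤ RCLike.re ⟪(T * A * T - ε • (T * T)) y, y⟫ :=
      ((nonneg_iff_isPositive _).1 hd).re_inner_nonneg_left y
    have e1 : ⟪(T * A * T) y, y⟫ = ⟪A (T y), T y⟫ := by
      have : (T * A * T) y = T (A (T y)) := rfl
      rw [this]
      exact hTsym (A (T y)) y
    have e2 : RCLike.re ⟪(ε • (T * T)) y, y⟫ = ε * ‖T y‖ ^ 2 := by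
      have : (ε • (T * T)) y = ε • (T (T y)) := rfl
      rw [this, RCLike.real_smul_eq_coe_smul (K := ℂ), inner_smul_real_left]
      have : ⟪T (T y), y⟫ = ⟪T y, T y⟫ := hTsym (T y) y
      rw [this, inner_self_eq_norm_sq_to_K]
      simp [RCLike.smul_re]
      exact Or.inl (by norm_cast)
    rw [sub_apply, inner_sub_left, map_sub, e1] at h0
    rw [← e2]
    linarith
  -- the closed subspace
  set V : Submodule ℂ HS := (LinearMap.range (T : HS →ₗ[ℂ] HS)).topologicalClosure with hV
  have hVclosed : IsClosed (V : Set HS) := Submodule.isClosed_topologicalClosure _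
  have hbound : ∀ x : HS, x ∈ V → ε * ‖x‖ ^ 2 ≤ RCLike.re ⟪A x, x⟫ := by
    have hCc : IsClosed {x : HS | ε * ‖x‖ ^ 2 ≤ RCLike.re ⟪A x, x⟫} := by
      apply isClosed_le
      · fun_prop
      · apply (RCLike.continuous_re).comp
        exact continuous_inner.comp (A.continuous.prodMk continuous_id)
    intro x hx
    have hsub2 : (LinearMap.range (T : HS →ₗ[ℂ] HS) : Set HS)
        ⊆ {x : HS | ε * ‖x‖ ^ 2 ≤ RCLike.re ⟪A x, x⟫} := by
      rintro _ ⟨y, rfl⟩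
      exact hkey y
    have := closure_minimal hsub2 hCc
    exact this (by rw [← Submodule.topologicalClosure_coe]; exact hx : x ∈ closure _)
  have hanti : ∀ x : HS, x ∈ V → ε * ‖x‖ ≤ ‖A x‖ := by
    intro x hx
    rcases eq_or_ne x 0 with rfl | hx0
    · simp
    · have h1 := hbound x hx
      have h2 : RCLike.re ⟪A x, x⟫ ≤ ‖A x‖ * ‖x‖ := by
        calc RCLike.re ⟪A x, x⟫ ≤ ‖⟪A x, x⟫‖ := RCLike.re_le_norm _
          _ ≤ ‖A x‖ * ‖x‖ := norm_inner_le_norm _ _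
      have hxpos : 0 < ‖x‖ := norm_pos_iff.2 hx0
      have : ε * ‖x‖ * ‖x‖ ≤ ‖A x‖ * ‖x‖ := by nlinarith
      exact le_of_mul_le_mul_right this hxpos
  haveI : CompleteSpace V := hVclosed.completeSpace_coe
  set g : V → HS := fun v => A v with hg
  have hlip : LipschitzWith ‖A‖₊ g := by
    apply LipschitzWith.of_dist_le_mul
    intro v w
    have h1 : g v - g w = A ((v : HS) - (w : HS)) := by simp [hg, map_sub]
    rw [dist_eq_norm, h1, Subtype.dist_eq, dist_eq_norm]
    exact A.le_opNorm _
  have hεinv : (0 : ℝ) ≤ ε⁻¹ := by positivity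
  have hanti' : AntilipschitzWith ⟨ε⁻¹, hεinv⟩ g := by
    apply AntilipschitzWith.of_le_mul_dist
    intro v w
    have hu : ((v : HS) - (w : HS)) ∈ V := sub_mem v.2 w.2
    have h2 := hanti _ hu
    have h1 : g v - g w = A ((v : HS) - (w : HS)) := by simp [hg, map_sub]
    rw [Subtype.dist_eq, dist_eq_norm, dist_eq_norm, h1]
    calc ‖(v : HS) - (w : HS)‖ ≤ ε⁻¹ * (ε * ‖(v : HS) - (w : HS)‖) := by
          rw [← mul_assoc, inv_mul_cancel₀ hε.ne', one_mul]
      _ ≤ ε⁻¹ * ‖A ((v : HS) - (w : HS))‖ := by gcongr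
  have hui : IsUniformInducing g := hanti'.isUniformInducing hlip.uniformContinuous
  have htb : TotallyBounded (Metric.closedBall (0 : V) 1) := by
    rw [← totallyBounded_image_iff hui]
    have hK : IsCompact (closure (⇑A '' Metric.closedBall 0 1)) :=
      hcpt.isCompact_closure_image_closedBall (f := (A : HS →ₗ[ℂ] HS)) 1
    refine hK.totallyBounded.subset ?_
    rintro _ ⟨v, hv, rfl⟩
    refine subset_closure ⟨(v : HS), ?_, rfl⟩
    simp only [Metric.mem_closedBall, dist_zero_right] at hv ⊢
    simpa using hv
  have hcompact : IsCompact (Metric.closedBall (0 : V) 1) :=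
    TotallyBounded.isCompact_of_isClosed htb Metric.isClosed_closedBall
  haveI : FiniteDimensional ℂ V := FiniteDimensional.of_isCompact_closedBall₀ ℂ zero_lt_one hcompact
  exact finRank_of_le this (Submodule.le_topologicalClosure _)

open ContinuousLinearMap
open scoped ComplexConjugate ENNReal
def pEq : ℕ × ℕ ≃ ℕ := Denumerable.eqv (ℕ × ℕ)

def embFun (k : ℕ) (f : HS) : ℕ → ℂ :=
  fun m => if (pEq.symm m).1 = k then f (pEq.symm m).2 else 0

lemma summable_sq (f : HS) : Summable fun n => ‖f n‖ ^ (2 : ℝ≥0∞).toReal := by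
  have := lp.memℓp f
  rwa [memℓp_gen_iff (by norm_num : 0 < (2 : ℝ≥0∞).toReal)] at this

lemma memℓp_embFun (k : ℕ) (f : HS) : Memℓp (embFun k f) 2 := by
  apply memℓp_gen
  have h1 : Summable fun q : ℕ × ℕ =>
      ‖embFun k f (pEq q)‖ ^ (2 : ℝ≥0∞).toReal := by
    have heq : (fun q : ℕ × ℕ => ‖embFun k f (pEq q)‖ ^ (2 : ℝ≥0∞).toReal)
        = fun q : ℕ × ℕ => if q.1 = k then ‖f q.2‖ ^ (2 : ℝ≥0∞).toReal else 0 := by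
      funext q
      simp only [embFun, Equiv.symm_apply_apply]
      split
      · rfl
      · simp [Real.zero_rpow, (by norm_num : (2 : ℝ≥0∞).toReal ≠ 0)]
    rw [heq]
    have hinj : Function.Injective (fun n : ℕ => ((k, n) : ℕ × ℕ)) := by
      intro a b h; simpa using h
    rw [← Function.Injective.summable_iff hinj ?_]
    · exact (summable_sq f).congr (fun n => by simp)
    · intro q hq
      rcases eq_or_ne q.1 k with h | h
      · exact absurd ⟨q.2, by subst h; simp⟩ hq
      · simp [h]
  exact (Equiv.summable_iff pEq).1 h1

noncomputable def Uel (k : ℕ) : HS →ₗ[ℂ] HS where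
  toFun f := ⟨embFun k f, memℓp_embFun k f⟩
  map_add' f g := by
    ext m
    change embFun k (f + g) m = embFun k f m + embFun k g m
    simp only [embFun]
    have : (⇑(f + g) : ∀ _ : ℕ, ℂ) = ⇑f + ⇑g := lp.coeFn_add f g
    rw [this]
    split <;> simp
  map_smul' c f := by
    ext m
    change embFun k (c • f) m = c • embFun k f m
    simp only [embFun]
    have : (⇑(c • f) : ∀ _ : ℕ, ℂ) = c • ⇑f := lp.coeFn_smul c f
    rw [this]
    split <;> simp

lemma inner_Uel (k l : ℕ) (f g : HS) :
    ⟪Uel k f, Uel l g⟫ = if k = l then ⟪f, g⟫ else 0 := by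
  rcases eq_or_ne k l with rfl | hkl
  · simp only [if_pos rfl]
    rw [lp.inner_eq_tsum, lp.inner_eq_tsum]
    have h1 : ∀ q : ℕ × ℕ,
        ⟪(Uel k f : HS) (pEq q), (Uel k g : HS) (pEq q)⟫
          = if q.1 = k then ⟪f q.2, g q.2⟫ else 0 := by
      intro q
      change ⟪embFun k f (pEq q), embFun k g (pEq q)⟫ = _
      simp only [embFun, Equiv.symm_apply_apply]
      split <;> simp
    rw [← Equiv.tsum_eq pEq (fun m => ⟪(Uel k f : HS) m, (Uel k g : HS) m⟫)]
    rw [tsum_congr h1]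
    have hinj : Function.Injective (fun n : ℕ => ((k, n) : ℕ × ℕ)) := by
      intro a b h; simpa using h
    rw [← Function.Injective.tsum_eq hinj ?_]
    · apply tsum_congr; intro n; simp
    · intro q hq
      rcases eq_or_ne q.1 k with h | h
      · exact ⟨q.2, by subst h; simp⟩
      · exact absurd (by simp [h]) hq
  · simp only [if_neg hkl]
    rw [lp.inner_eq_tsum]
    have h1 : ∀ m : ℕ, ⟪(Uel k f : HS) m, (Uel l g : HS) m⟫ = (0 : ℂ) := by
      intro m
      change ⟪embFun k f m, embFun l g m⟫ = 0
      simp only [embFun]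
      rcases eq_or_ne (pEq.symm m).1 k with h | h
      · have h2 : (pEq.symm m).1 ≠ l := by rw [h]; exact hkl
        rw [if_pos h, if_neg h2]; simp
      · rw [if_neg h]; simp
    rw [tsum_congr h1, tsum_zero]

noncomputable def U (k : ℕ) : HS →L[ℂ] HS :=
  LinearMap.mkContinuous (Uel k) 1 (by
    intro f
    have h : ‖Uel k f‖ ^ 2 = ‖f‖ ^ 2 := by
      have h1 := inner_Uel k k f f
      rw [if_pos rfl] at h1
      have e1 : (RCLike.re ⟪Uel k f, Uel k f⟫ : ℝ) = ‖Uel k f‖ ^ 2 := by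
        rw [inner_self_eq_norm_sq]
      have e2 : (RCLike.re ⟪f, f⟫ : ℝ) = ‖f‖ ^ 2 := by
        rw [inner_self_eq_norm_sq]
      rw [← e1, ← e2, h1]
    rw [one_mul]
    nlinarith [norm_nonneg (Uel k f), norm_nonneg f])

lemma U_inner (k l : ℕ) (x y : HS) :
    ⟪U k x, U l y⟫ = if k = l then ⟪x, y⟫ else 0 := inner_Uel k l x y

lemma U_adj_apply (k : ℕ) (a x : HS) : ⟪U k a, x⟫ = ⟪a, star (U k) x⟫ := by
  rw [star_eq_adjoint]
  exact (ContinuousLinearMap.adjoint_inner_right _ _ _).symm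

lemma U_star_U (k : ℕ) : star (U k) * U k = (1 : HS →L[ℂ] HS) := by
  apply ContinuousLinearMap.ext
  intro x
  apply ext_inner_left ℂ
  intro v
  rw [ContinuousLinearMap.mul_apply, star_eq_adjoint, ContinuousLinearMap.adjoint_inner_right]
  rw [U_inner, if_pos rfl]
  simp

lemma norm_sum_U_sq (t : Finset ℕ) (w : ℕ → HS) :
    ‖∑ k ∈ t, U k (w k)‖ ^ 2 = ∑ k ∈ t, ‖w k‖ ^ 2 := by
  have h1 : ⟪∑ k ∈ t, U k (w k), ∑ l ∈ t, U l (w l)⟫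
      = (∑ k ∈ t, (‖w k‖ : ℂ) ^ 2) := by
    rw [sum_inner]
    apply Finset.sum_congr rfl
    intro k hk
    rw [inner_sum]
    have : ∀ l ∈ t, ⟪U k (w k), U l (w l)⟫ = if k = l then ⟪w k, w l⟫ else 0 :=
      fun l _ => U_inner k l (w k) (w l)
    rw [Finset.sum_congr rfl this, Finset.sum_ite_eq t k (fun l => ⟪w k, w l⟫), if_pos hk]
    rw [inner_self_eq_norm_sq_to_K]
    norm_cast
  have h2 : ‖∑ k ∈ t, U k (w k)‖ ^ 2 = RCLike.re ⟪∑ k ∈ t, U k (w k), ∑ l ∈ t, U l (w l)⟫ := by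
    rw [inner_self_eq_norm_sq]
  rw [h2, h1]
  have : RCLike.re (∑ k ∈ t, (‖w k‖ : ℂ) ^ 2) = ∑ k ∈ t, RCLike.re ((‖w k‖ : ℂ) ^ 2) :=
    map_sum _ _ _
  rw [this]
  apply Finset.sum_congr rfl
  intro k _
  norm_cast

lemma bessel_sum (t : Finset ℕ) (x : HS) :
    ∑ k ∈ t, ‖star (U k) x‖ ^ 2 ≤ ‖x‖ ^ 2 := by
  set y : ℕ → HS := fun k => star (U k) x with hy
  set v : HS := ∑ k ∈ t, U k (y k) with hv
  set β : ℝ := ∑ k ∈ t, ‖y k‖ ^ 2 with hβ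
  have hβ0 : 0 ≤ β := Finset.sum_nonneg fun k _ => sq_nonneg _
  have hv2 : ‖v‖ ^ 2 = β := norm_sum_U_sq t y
  have hv1 : ⟪v, x⟫ = (β : ℂ) := by
    rw [hv, sum_inner]
    have : ∀ k ∈ t, ⟪U k (y k), x⟫ = (‖y k‖ : ℂ) ^ 2 := by
      intro k _
      rw [U_adj_apply]
      show ⟪y k, y k⟫ = _
      rw [inner_self_eq_norm_sq_to_K]
      norm_cast
    rw [Finset.sum_congr rfl this, hβ]
    push_cast
    rfl
  have hcs := norm_inner_le_norm (𝕜 := ℂ) v x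
  rw [hv1] at hcs
  have habs : ‖(β : ℂ)‖ = β := by
    rw [Complex.norm_real, Real.norm_eq_abs, abs_of_nonneg hβ0]
  rw [habs] at hcs
  nlinarith [norm_nonneg v, norm_nonneg x, hv2, hcs]

lemma norm_blockSum (t : Finset ℕ) (A : ℕ → HS →L[ℂ] HS) {C : ℝ} (hC : 0 ≤ C)
    (hA : ∀ k, ‖A k‖ ≤ C) : ‖∑ k ∈ t, U k ∘L A k ∘L star (U k)‖ ≤ C := by
  apply opNorm_le_bound _ hC
  intro x
  set y : ℕ → HS := fun k => star (U k) x with hy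
  have hSx : (∑ k ∈ t, U k ∘L A k ∘L star (U k)) x = ∑ k ∈ t, U k (A k (y k)) := by
    rw [ContinuousLinearMap.sum_apply]
    rfl
  rw [hSx]
  have h1 : ‖∑ k ∈ t, U k (A k (y k))‖ ^ 2 = ∑ k ∈ t, ‖A k (y k)‖ ^ 2 :=
    norm_sum_U_sq t _
  have h2 : ∑ k ∈ t, ‖A k (y k)‖ ^ 2 ≤ C ^ 2 * ∑ k ∈ t, ‖y k‖ ^ 2 := by
    rw [Finset.mul_sum]
    apply Finset.sum_le_sum
    intro k _
    have : ‖A k (y k)‖ ≤ C * ‖y k‖ :=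
      ((A k).le_opNorm (y k)).trans (mul_le_mul_of_nonneg_right (hA k) (norm_nonneg _))
    nlinarith [norm_nonneg (A k (y k)), norm_nonneg (y k)]
  have h3 := bessel_sum t x
  have h4 : ‖∑ k ∈ t, U k (A k (y k))‖ ^ 2 ≤ (C * ‖x‖) ^ 2 := by
    rw [h1]
    calc ∑ k ∈ t, ‖A k (y k)‖ ^ 2 ≤ C ^ 2 * ∑ k ∈ t, ‖y k‖ ^ 2 := h2
      _ ≤ C ^ 2 * ‖x‖ ^ 2 := by nlinarith [sq_nonneg C]
      _ = (C * ‖x‖) ^ 2 := by ring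
  nlinarith [norm_nonneg (∑ k ∈ t, U k (A k (y k))), mul_nonneg hC (norm_nonneg x)]

end St18

namespace St18
open ContinuousLinearMap
local notation "⟪" x ", " y "⟫" => @inner ℂ _ _ x y

lemma pos_sum {ι : Type*} (s : Finset ι) (f : ι → HS →L[ℂ] HS)
    (h : ∀ i ∈ s, (f i).IsPositive) : (∑ i ∈ s, f i).IsPositive := by
  classical
  induction s using Finset.induction_on with
  | empty => simpa using isPositive_zero
  | @insert a s ha ih =>
    rw [Finset.sum_insert ha]
    exact (h _ (Finset.mem_insert_self _ _)).add (ih fun i hi => h i (Finset.mem_insert_of_mem hi))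

variable {G : Type*} [Group G]

lemma master (τ : (G → HS →L[ℂ] HS) → ℝ≥0∞)
    (hadd : ∀ f g, Bdd f → Cpt f → Pos f → Bdd g → Cpt g → Pos g → τ (f + g) = τ f + τ g)
    (hzero : τ 0 = 0)
    (htr : ∀ x : G → HS →L[ℂ] HS, Bdd x → Cpt x →
      τ (fun t => star (x t) * x t) = τ (fun t => x t * star (x t)))
    (hfin : ∀ f, Bdd f → Pos f → (∀ t, FinRank (f t)) → τ f ≠ ⊤)
    (b : ℕ → G → HS →L[ℂ] HS) {C : ℝ} (hC0 : 0 ≤ C)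
    (hbC : ∀ k s, ‖b k s‖ ≤ C)
    (hbpos : ∀ k s, (b k s).IsPositive)
    (hbfr : ∀ k s, FinRank (b k s))
    (K : G → Finset ℕ)
    (hvanish : ∀ k s, k ∉ K s → b k s = 0)
    {δ : ℝ≥0∞} (hδ : δ ≠ 0)
    (hbval : ∀ k, τ (b k) = δ) : False := by
  classical
  set Bk : ℕ → G → HS →L[ℂ] HS := fun k s => U k ∘L b k s ∘L star (U k) with hBk
  have hBkpos : ∀ k s, (Bk k s).IsPositive := by
    intro k s
    rw [hBk]
    simp only [star_eq_adjoint]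
    exact (hbpos k s).conj_adjoint (U k)
  have hBkfr : ∀ k s, FinRank (Bk k s) :=
    fun k s => finRank_comp_left _ (finRank_comp_right _ (hbfr k s))
  have hBkzero : ∀ k s, b k s = 0 → Bk k s = 0 := by
    intro k s h
    simp [hBk, h]
  -- conjugation invariance via the trace property
  have hconj : ∀ k, τ (Bk k) = δ := by
    intro k
    set sq : G → HS →L[ℂ] HS := fun s => CFC.sqrt (b k s) with hsq
    have hsqnn : ∀ s, (0 : HS →L[ℂ] HS) ≤ sq s := fun s => CFC.sqrt_nonneg (b k s)
    have hsqsa : ∀ s, IsSelfAdjoint (sq s) := fun s => IsSelfAdjoint.of_nonneg (hsqnn s)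
    have hsqmul : ∀ s, sq s * sq s = b k s := fun s =>
      CFC.sqrt_mul_sqrt_self _ ((nonneg_iff_isPositive _).2 (hbpos k s))
    set x : G → HS →L[ℂ] HS := fun s => U k ∘L sq s with hx
    have hxb : Bdd x := by
      refine ⟨‖U k‖ * Real.sqrt C, fun s => ?_⟩
      have h2 : ‖sq s‖ * ‖sq s‖ = ‖b k s‖ := by
        calc ‖sq s‖ * ‖sq s‖ = ‖star (sq s) * sq s‖ := (CStarRing.norm_star_mul_self).symm
          _ = ‖sq s * sq s‖ := by rw [(hsqsa s).star_eq]
          _ = ‖b k s‖ := by rw [hsqmul s]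
      have h1 : ‖sq s‖ ≤ Real.sqrt C := by
        nlinarith [Real.sq_sqrt hC0, Real.sqrt_nonneg C, norm_nonneg (sq s), hbC k s]
      calc ‖x s‖ ≤ ‖U k‖ * ‖sq s‖ := opNorm_comp_le _ _
        _ ≤ ‖U k‖ * Real.sqrt C := by
            exact mul_le_mul_of_nonneg_left h1 (norm_nonneg _)
    have hxc : Cpt x := by
      intro s
      exact finRank_isCompact (finRank_comp_left _ (sqrt_finRank (hbpos k s) (hbfr k s)))
    have heq1 : (fun s => star (x s) * x s) = b k := by
      funext s
      show star (U k ∘L sq s) * (U k ∘L sq s) = b k s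
      have h0 : (U k ∘L sq s) = U k * sq s := rfl
      rw [h0, star_mul, mul_assoc, ← mul_assoc (star (U k)), U_star_U k, one_mul,
        (hsqsa s).star_eq, hsqmul s]
    have heq2 : (fun s => x s * star (x s)) = Bk k := by
      funext s
      show (U k ∘L sq s) * star (U k ∘L sq s) = Bk k s
      have h0 : (U k ∘L sq s) = U k * sq s := rfl
      rw [h0, star_mul, (hsqsa s).star_eq]
      have h1 : Bk k s = U k * (b k s * star (U k)) := rfl
      rw [h1, ← hsqmul s]
      simp only [mul_assoc]
    have := htr x hxb hxc
    rw [heq1, heq2] at this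
    rw [← this, hbval k]
  -- the sums
  set Part : ℕ → G → HS →L[ℂ] HS := fun N s => ∑ k ∈ Finset.range N, Bk k s with hPart
  set F : G → HS →L[ℂ] HS := fun s => ∑ k ∈ K s, Bk k s with hF
  set Tail : ℕ → G → HS →L[ℂ] HS :=
    fun N s => ∑ k ∈ K s \ Finset.range N, Bk k s with hTail
  have hsumBdd : ∀ (t : Finset ℕ) (s : G), ‖∑ k ∈ t, Bk k s‖ ≤ C :=
    fun t s => norm_blockSum t (fun k => b k s) hC0 (fun k => hbC k s)
  have hsumPos : ∀ (t : Finset ℕ) (s : G), (∑ k ∈ t, Bk k s).IsPositive :=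
    fun t s => pos_sum t _ (fun k _ => hBkpos k s)
  have hsumFr : ∀ (t : Finset ℕ) (s : G), FinRank (∑ k ∈ t, Bk k s) :=
    fun t s => finRank_sum t _ (fun k _ => hBkfr k s)
  have hPartBdd : ∀ N, Bdd (Part N) := fun N => ⟨C, fun s => hsumBdd _ s⟩
  have hPartPos : ∀ N, Pos (Part N) := fun N s => hsumPos _ s
  have hPartFr : ∀ N s, FinRank (Part N s) := fun N s => hsumFr _ s
  have hPartCpt : ∀ N, Cpt (Part N) := fun N s => finRank_isCompact (hPartFr N s)
  have hBkBdd : ∀ k, Bdd (Bk k) := by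
    intro k
    refine ⟨C, fun s => ?_⟩
    have := hsumBdd {k} s
    simpa using this
  have hBkCpt : ∀ k, Cpt (Bk k) := fun k s => finRank_isCompact (hBkfr k s)
  have hPartval : ∀ N, τ (Part N) = (N : ℝ≥0∞) * δ := by
    intro N
    induction N with
    | zero =>
      have h0 : Part 0 = 0 := funext fun s => by simp [hPart]
      rw [h0, hzero]
      simp
    | succ n ih =>
      have hsplit : Part (n + 1) = Part n + Bk n := by
        funext s
        show ∑ k ∈ Finset.range (n + 1), Bk k s = Part n s + Bk n s
        rw [Finset.sum_range_succ]
      rw [hsplit, hadd _ _ (hPartBdd n) (hPartCpt n) (hPartPos n) (hBkBdd n) (hBkCpt n)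
        (fun s => hBkpos n s), ih, hconj n]
      rw [Nat.cast_succ, add_mul, one_mul]
  have hFsplit : ∀ N, F = Part N + Tail N := by
    intro N
    funext s
    show ∑ k ∈ K s, Bk k s = Part N s + Tail N s
    have h1 : Part N s = ∑ k ∈ K s ∩ Finset.range N, Bk k s := by
      show ∑ k ∈ Finset.range N, Bk k s = _
      refine (Finset.sum_subset Finset.inter_subset_right ?_).symm
      intro k hk hknot
      have hkK : k ∉ K s := fun hmem => hknot (Finset.mem_inter.2 ⟨hmem, hk⟩)
      exact hBkzero k s (hvanish k s hkK)
    rw [h1]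
    exact (Finset.sum_inter_add_sum_sdiff (K s) (Finset.range N) _).symm
  have hTailBdd : ∀ N, Bdd (Tail N) := fun N => ⟨C, fun s => hsumBdd _ s⟩
  have hTailPos : ∀ N, Pos (Tail N) := fun N s => hsumPos _ s
  have hTailCpt : ∀ N, Cpt (Tail N) := fun N s => finRank_isCompact (hsumFr _ s)
  have hFval : ∀ N : ℕ, (N : ℝ≥0∞) * δ ≤ τ F := by
    intro N
    rw [hFsplit N, hadd _ _ (hPartBdd N) (hPartCpt N) (hPartPos N) (hTailBdd N) (hTailCpt N)
      (hTailPos N), hPartval N]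
    exact le_self_add
  have hFfin : τ F ≠ ⊤ :=
    hfin F ⟨C, fun s => hsumBdd _ s⟩ (fun s => hsumPos _ s) (fun s => hsumFr _ s)
  obtain ⟨n, hn⟩ := ENNReal.exists_nat_mul_gt hδ hFfin
  exact absurd (hFval n) (not_le.2 hn)

lemma key {G : Type*} [Group G] [Countable G] [Infinite G]
    (τ : (G → HS →L[ℂ] HS) → ℝ≥0∞)
    (hadd : ∀ f g, Bdd f → Cpt f → Pos f → Bdd g → Cpt g → Pos g → τ (f + g) = τ f + τ g)
    (hzero : τ 0 = 0)
    (htr : ∀ x : G → HS →L[ℂ] HS, Bdd x → Cpt x →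
      τ (fun t => star (x t) * x t) = τ (fun t => x t * star (x t)))
    (hfin : ∀ f, Bdd f → Pos f → (∀ t, FinRank (f t)) → τ f ≠ ⊤)
    (hinv : ∀ f, Bdd f → Cpt f → Pos f → ∀ g : G, τ (fun s => f (g⁻¹ * s)) = τ f) :
    ∀ g, Bdd g → Pos g → (∀ t, FinRank (g t)) → τ g = 0 := by
  intro g hgb hgp hgfr
  classical
  by_contra hne
  have hgc : Cpt g := fun t => finRank_isCompact (hgfr t)
  obtain ⟨C, hC⟩ := hgb
  have hC0 : 0 ≤ C := (norm_nonneg (g 1)).trans (hC 1)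
  haveI : Encodable G := Encodable.ofCountable G
  haveI : Denumerable G := Denumerable.ofEncodableOfInfinite G
  set e : ℕ ≃ G := (Denumerable.eqv G).symm with he
  set res : Set G → (G → HS →L[ℂ] HS) := fun X t => if t ∈ X then g t else 0 with hres
  have hresC : ∀ X t, ‖res X t‖ ≤ C := by
    intro X t
    by_cases h : t ∈ X <;> simp [hres, h, hC t, hC0]
  have hresBdd : ∀ X, Bdd (res X) := fun X => ⟨C, hresC X⟩
  have hresPos : ∀ X, Pos (res X) := by
    intro X t
    by_cases h : t ∈ X
    · simpa [hres, h] using hgp t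
    · simpa [hres, h] using ContinuousLinearMap.isPositive_zero
  have hresFr : ∀ X t, FinRank (res X t) := by
    intro X t
    by_cases h : t ∈ X
    · simpa [hres, h] using hgfr t
    · simpa [hres, h] using finRank_zero
  have hresCpt : ∀ X, Cpt (res X) := fun X t => finRank_isCompact (hresFr X t)
  have hsplit : ∀ X : Set G, τ g = τ (res X) + τ (res Xᶜ) := by
    intro X
    have h1 : res X + res Xᶜ = g := by
      funext t
      show res X t + res Xᶜ t = g t
      by_cases h : t ∈ X <;> simp [hres, h]
    rw [← h1, hadd _ _ (hresBdd X) (hresCpt X) (hresPos X) (hresBdd Xᶜ) (hresCpt Xᶜ)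
      (hresPos Xᶜ)]
  by_cases hA : ∃ S : Finset G, τ (res ↑S) ≠ 0
  · obtain ⟨S, hS⟩ := hA
    refine master τ hadd hzero htr hfin (fun k s => res ↑S ((e k)⁻¹ * s)) hC0
      (fun k s => hresC _ _) (fun k s => hresPos _ _) (fun k s => hresFr _ _)
      (fun s => S.image (fun u => e.symm (s * u⁻¹))) ?_ hS
      (fun k => hinv (res ↑S) (hresBdd _) (hresCpt _) (hresPos _) (e k))
    intro k s hk
    by_cases h : (e k)⁻¹ * s ∈ (↑S : Set G)
    · exfalso
      apply hk
      refine Finset.mem_image.2 ⟨(e k)⁻¹ * s, Finset.mem_coe.1 h, ?_⟩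
      rw [mul_inv_rev, inv_inv, ← mul_assoc, mul_inv_cancel, one_mul, Equiv.symm_apply_apply]
    · simp [hres, h]
  · push_neg at hA
    set E : ℕ → Finset G := fun k => (Finset.range (k + 1)).image e with hE
    set Sk : ℕ → Finset G := fun k => (E k).image (fun v => (e k)⁻¹ * v) with hSk
    have hδval : ∀ k, τ (res (↑(Sk k) : Set G)ᶜ) = τ g := by
      intro k
      have := hsplit (↑(Sk k) : Set G)
      rw [hA (Sk k), zero_add] at this
      exact this.symm
    refine master τ hadd hzero htr hfin
      (fun k s => res (↑(Sk k) : Set G)ᶜ ((e k)⁻¹ * s)) hC0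
      (fun k s => hresC _ _) (fun k s => hresPos _ _) (fun k s => hresFr _ _)
      (fun s => Finset.range (e.symm s)) ?_ hne
      (fun k => by rw [hinv (res (↑(Sk k) : Set G)ᶜ) (hresBdd _) (hresCpt _) (hresPos _) (e k),
        hδval k])
    intro k s hk
    have hks : e.symm s ≤ k := by simpa using hk
    have hsE : s ∈ E k := by
      refine Finset.mem_image.2 ⟨e.symm s, ?_, Equiv.apply_symm_apply e s⟩
      exact Finset.mem_range.2 (Nat.lt_succ_of_le hks)
    have hmem : (e k)⁻¹ * s ∈ Sk k := Finset.mem_image.2 ⟨s, hsE, rfl⟩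
    have : ¬ ((e k)⁻¹ * s ∈ (↑(Sk k) : Set G)ᶜ) := by
      simp only [Set.mem_compl_iff, Finset.mem_coe, not_not]
      exact hmem
    simp [hres, this]

end St18

/-- For a countably infinite group `G`, the only `G`-invariant densely defined
lower semi-continuous trace on `ℓ∞(G, K)` (with `G` acting by left translation) is zero. -/
theorem stmt18 (G : Type*) [Group G] [Countable G] [Infinite G]
    (τ : (G → HS →L[ℂ] HS) → ℝ≥0∞)
    (hadd : ∀ f g, Bdd f → Cpt f → Pos f → Bdd g → Cpt g → Pos g → τ (f + g) = τ f + τ g)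
    (hzero : τ 0 = 0)
    (hhom : ∀ f, Bdd f → Cpt f → Pos f → ∀ r : ℝ, 0 < r →
      τ (fun t => r • f t) = ENNReal.ofReal r * τ f)
    (htr : ∀ x : G → HS →L[ℂ] HS, Bdd x → Cpt x →
      τ (fun t => star (x t) * x t) = τ (fun t => x t * star (x t)))
    (hlsc : ∀ f, Bdd f → Cpt f → Pos f →
      τ f = ⨆ ε : {ε : ℝ // 0 < ε},
        τ (fun t => cfc (instCFC := IsSelfAdjoint.instContinuousFunctionalCalculus) (fun s : ℝ => max (s - (ε : ℝ)) 0) (f t)))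
    (hfin : ∀ f, Bdd f → Pos f → (∀ t, FinRank (f t)) → τ f ≠ ⊤)
    (hinv : ∀ f, Bdd f → Cpt f → Pos f → ∀ g : G, τ (fun s => f (g⁻¹ * s)) = τ f) :
    ∀ f, Bdd f → Cpt f → Pos f → τ f = 0 := by
  intro f hb hc hp
  rw [hlsc f hb hc hp, ENNReal.iSup_eq_zero]
  rintro ⟨ε, hε⟩
  obtain ⟨C, hC⟩ := hb
  exact St18.key τ hadd hzero htr hfin hinv _
    ⟨max C 0, fun t => St18.cutoff_norm_le (hC t) hε.le⟩
    (fun t => St18.cutoff_isPositive ε)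
    (fun t => St18.cutoff_finRank (hp t) (hc t) hε)
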